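/- The free cumulant R_{l+1} of the multirectangular diagram λ(p,q) satisfies R_{l+1}(λ(p,q)) = Σ_{π ∈ NC(l)} (−1)^{|π|+1} N^π(p,q), where the sum runs over non-crossing partitions π of {1,...,l}, |π| is the number of blocks, and N^π = N(M^{σ_π, σ_π⁻¹(1...l)}) is the power series associated to the bicolored map of the minimal factorization determined by π. -/

import Mathlib

/-- The minimal number of transpositions needed to write `σ` as a product of
transpositions (`0` for the identity). -/
noncomputable def transLength {n : ℕ} (σ : Equiv.Perm (Fin n)) : ℕ :=
  sInf {h | ∃ L : List (Equiv.Perm (Fin n)), L.length = h ∧ (∀ x ∈ L, x.IsSwap) ∧ L.prod = σ}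

/-- The setoid on `Fin n` whose classes are the orbits (cycles, including fixed
points) of the permutation `τ`. -/
def cycleSetoid {n : ℕ} (τ : Equiv.Perm (Fin n)) : Setoid (Fin n) :=
  ⟨τ.SameCycle, ⟨fun x => Equiv.Perm.SameCycle.refl τ x, fun h => h.symm, fun h h' => h.trans h'⟩⟩

/-- The number of orbits of `{1,…,n}` under `τ` (fixed points count as cycles). -/
noncomputable def cycleCount {n : ℕ} (τ : Equiv.Perm (Fin n)) : ℕ :=
  Nat.card (Quotient (cycleSetoid τ))

/-- A partition (setoid) of `Fin j` is non-crossing if there are no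
`a < b < c < d` with `a,c` in one block and `b,d` in a different block. -/
def NonCrossing {j : ℕ} (π : Setoid (Fin j)) : Prop :=
  ¬ ∃ a b c d : Fin j, a < b ∧ b < c ∧ c < d ∧ π.r a c ∧ π.r b d ∧ ¬ π.r a b

open Fin.NatCast in
/-- For a partition `π` of `Fin j`, `nextElem π i` is the next element after `i`
in the same block as `i`, for the cyclic order `(1,2,…,j)`. -/
noncomputable def nextElem {j : ℕ} [NeZero j] (π : Setoid (Fin j)) (i : Fin j) : Fin j :=
  i + ((sInf {t : ℕ | 0 < t ∧ π.r i (i + (t : Fin j))} : ℕ) : Fin j)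

open scoped Classical in
/-- The power series (specialized to `m` rectangles) associated to a bicolored
graph: white vertices `W`, black vertices `B`, active edges `S` going from
`src e` (white) to `tgt e` (black).  It is the sum, over admissible evaluations
`ψ` (those with `ψ(black) ≥ ψ(white)` along every active edge), of
`∏ p_{ψ(w)} · ∏ q_{ψ(b)}`. -/
noncomputable def NGraph {W B E : Type} [Fintype W] [Fintype B] [Fintype E]
    (src : E → W) (tgt : E → B) (S : Finset E) {m : ℕ} (p q : Fin m → ℝ) : ℝ :=
  ∑ ψw : W → Fin m, ∑ ψb : B → Fin m,
    if ∀ e ∈ S, ψw (src e) ≤ ψb (tgt e) then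
      (∏ w : W, p (ψw w)) * (∏ b : B, q (ψb b)) else 0

/-- The power series `N^{τ,τ̄}` of a pair of permutations: the one of its
bicolored graph, whose white vertices are the cycles of `τ`, black vertices the
cycles of `τ̄`, with an edge for every `i ∈ {1,…,k}`. -/
noncomputable def Nperm {k : ℕ} (τ τb : Equiv.Perm (Fin k)) {m : ℕ} (p q : Fin m → ℝ) : ℝ :=
  letI : Fintype (Quotient (cycleSetoid τ)) := Fintype.ofFinite _
  letI : Fintype (Quotient (cycleSetoid τb)) := Fintype.ofFinite _
  NGraph (fun i : Fin k => Quotient.mk (cycleSetoid τ) i)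
    (fun i : Fin k => Quotient.mk (cycleSetoid τb) i) Finset.univ p q

/-- Stanley's formula for the normalized character `Σ_k` on a `k`-cycle, as a
power series in the multirectangular coordinates `p,q`:
`Σ_k = ∑_{τ τ̄ = (1…k)} (-1)^{|C(τ)|+1} N^{τ,τ̄}`. -/
noncomputable def SigmaStanley (k : ℕ) {m : ℕ} (p q : Fin m → ℝ) : ℝ :=
  ∑ τ : Equiv.Perm (Fin k),
    (-1 : ℝ) ^ (cycleCount τ + 1) * Nperm τ (τ⁻¹ * finRotate k) p q

/-- The free cumulant `R_j` as a power series in the multirectangular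
coordinates `p,q`: the graded degree `j` part of `Σ_{j-1}`, i.e. the part of
Stanley's formula coming from minimal factorizations:
`R_{l+1} = ∑_{τ τ̄ = (1…l), |C(τ)|+|C(τ̄)| = l+1} (-1)^{|C(τ)|+1} N^{τ,τ̄}`. -/
noncomputable def Rcum (j : ℕ) {m : ℕ} (p q : Fin m → ℝ) : ℝ :=
  ∑ τ : Equiv.Perm (Fin (j - 1)),
    if cycleCount τ + cycleCount (τ⁻¹ * finRotate (j - 1)) = j then
      (-1 : ℝ) ^ (cycleCount τ + 1) * Nperm τ (τ⁻¹ * finRotate (j - 1)) p q else 0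

open Equiv Equiv.Perm
open Fin.NatCast

namespace P18


/-- cyclic distance: number of steps from `a` to `b` going forward. -/
def dd {l : ℕ} (a b : Fin l) : ℕ := (b - a).val

theorem dd_val {l : ℕ} [NeZero l] (a b : Fin l) :
    dd a b = if a.val ≤ b.val then b.val - a.val else l - (a.val - b.val) := by
  have hl : 0 < l := Nat.pos_of_ne_zero (NeZero.ne l)
  have ha := a.isLt; have hb := b.isLt
  rw [dd, Fin.sub_def]
  simp only
  split
  · rw [show l - a.val + b.val = (b.val - a.val) + l by omega, Nat.add_mod_right,
      Nat.mod_eq_of_lt (by omega)]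
  · rw [Nat.mod_eq_of_lt (by omega)]; omega

theorem dd_lt {l : ℕ} [NeZero l] (a b : Fin l) : dd a b < l := (b - a).isLt

theorem dd_self {l : ℕ} [NeZero l] (a : Fin l) : dd a a = 0 := by simp [dd_val]

theorem dd_eq_zero_iff {l : ℕ} [NeZero l] {a b : Fin l} : dd a b = 0 ↔ a = b := by
  have ha := a.isLt; have hb := b.isLt
  rw [dd_val, Fin.ext_iff]
  split <;> omega

theorem add_dd {l : ℕ} [NeZero l] (a b : Fin l) : a + ((dd a b : ℕ) : Fin l) = b := by
  simp [dd]

theorem dd_add_nat {l : ℕ} [NeZero l] (a : Fin l) (t : ℕ) : dd a (a + (t : Fin l)) = t % l := by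
  simp only [dd, add_sub_cancel_left, Fin.val_natCast]

theorem dd_add_right {l : ℕ} [NeZero l] (a b k : Fin l) : dd (a + k) (b + k) = dd a b := by
  simp only [dd, add_sub_add_right_eq_sub]

theorem dd_inj {l : ℕ} [NeZero l] {a b c : Fin l} (h : dd a b = dd a c) : b = c := by
  have h1 := add_dd a b; have h2 := add_dd a c
  rw [h] at h1; exact h1.symm.trans h2

theorem dd_one {l : ℕ} [NeZero l] {a b : Fin l} (h : dd a b = 1) : b = a + 1 := by
  have h1 := add_dd a b
  rw [h] at h1; simpa using h1.symm

theorem dd_add_one {l : ℕ} [NeZero l] (a : Fin l) (h : a + 1 ≠ a) : dd a (a + 1) = 1 := by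
  have h2 := dd_add_nat a 1
  rcases Nat.lt_or_ge 1 l with hl | hl
  · simpa [Nat.mod_eq_of_lt hl] using h2
  · exfalso; apply h; have : l = 1 := by have := Nat.pos_of_ne_zero (NeZero.ne l); omega
    subst this; exact Subsingleton.elim _ _

/-- splitting a cyclic interval -/
theorem dd_sub {l : ℕ} [NeZero l] {a x b : Fin l} (h : dd a x ≤ dd a b) :
    dd x b = dd a b - dd a x := by
  have h1 := add_dd a x
  have hb := dd_lt a b
  obtain ⟨u, hu⟩ : ∃ u, dd a b = dd a x + u := ⟨_, (Nat.add_sub_cancel' h).symm⟩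
  have h2 := add_dd a b
  rw [hu, Nat.cast_add, ← add_assoc, h1] at h2
  rw [hu, Nat.add_sub_cancel_left, ← h2, dd_add_nat, Nat.mod_eq_of_lt (by omega)]




theorem sc_pow_iff {l : ℕ} (τ : Perm (Fin l)) {x y : Fin l} :
    τ.SameCycle x y ↔ ∃ i : ℕ, (τ ^ i) x = y := by
  constructor
  · intro h
    obtain ⟨i, _, _, h⟩ := h.exists_pow_eq τ
    exact ⟨i, h⟩
  · rintro ⟨i, h⟩
    exact ⟨(i : ℤ), by simpa using h⟩

theorem sc_fixed {l : ℕ} {τ : Perm (Fin l)} {x y : Fin l} (hx : τ x = x) :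
    τ.SameCycle x y ↔ y = x := by
  constructor
  · rintro ⟨k, hk⟩
    rw [Equiv.Perm.zpow_apply_eq_self_of_apply_eq_self hx] at hk
    exact hk.symm
  · rintro rfl; exact ⟨0, rfl⟩

theorem sc_apply {l : ℕ} (τ : Perm (Fin l)) (x : Fin l) : τ.SameCycle x (τ x) := ⟨1, rfl⟩

/-- generic counting lemma: if the `R`-class of `z` is `{z}` and `f : β → α∖{z}`
induces a bijection of `S`-classes onto the `R`-classes other than `⟦z⟧`,
then `R` has one more class than `S`. -/
theorem card_quot_succ {α β : Type*} [Finite α] (R : Setoid α) (S : Setoid β) (z : α)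
    (f : β → α) (hf : ∀ b, f b ≠ z) (hz : ∀ a, R.r z a ↔ a = z)
    (hfr : ∀ a b, S.r a b ↔ R.r (f a) (f b))
    (hsurj : ∀ a, a ≠ z → ∃ b, R.r (f b) a) :
    Nat.card (Quotient R) = Nat.card (Quotient S) + 1 := by
  classical
  cases nonempty_fintype α
  have e : Quotient S ≃ {q : Quotient R // q ≠ (Quotient.mk R z)} := by
    refine Equiv.ofBijective
      (fun q => ⟨Quotient.lift (fun b => (Quotient.mk R (f b) : Quotient R))
        (fun a b hab => Quotient.sound (hfr a b |>.mp hab)) q, ?_⟩) ⟨?_, ?_⟩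
    · induction q using Quotient.inductionOn with
      | h b =>
        simp only [Quotient.lift_mk]
        intro hq
        exact hf b ((hz (f b)).mp (Setoid.symm (Quotient.exact hq)))
    · intro q1 q2 h12
      induction q1 using Quotient.inductionOn with
      | h b1 =>
      induction q2 using Quotient.inductionOn with
      | h b2 =>
        simp only [Subtype.mk_eq_mk, Quotient.lift_mk] at h12
        exact Quotient.sound ((hfr b1 b2).mpr (Quotient.exact h12))
    · rintro ⟨q, hq⟩
      induction q using Quotient.inductionOn with
      | h a =>
        have ha : a ≠ z := by
          intro h; exact hq (by rw [h])
        obtain ⟨b, hb⟩ := hsurj a ha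
        exact ⟨Quotient.mk S b, by simpa using Quotient.sound hb⟩
  rw [Nat.card_congr e]
  have : Nat.card {q : Quotient R // q ≠ Quotient.mk R z} + 1 = Nat.card (Quotient R) := by
    haveI : Fintype (Quotient R) := Fintype.ofFinite _
    rw [Nat.card_eq_fintype_card, Nat.card_eq_fintype_card]
    have h1 : Fintype.card {q : Quotient R // q ≠ Quotient.mk R z} =
        Fintype.card {q : Quotient R // ¬ (q = Quotient.mk R z)} := rfl
    rw [h1, Fintype.card_subtype_compl]
    have h2 : Fintype.card {q : Quotient R // q = Quotient.mk R z} = 1 :=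
      Fintype.card_subtype_eq _
    rw [h2]
    have h3 : 0 < Fintype.card (Quotient R) :=
      Fintype.card_pos_iff.mpr ⟨Quotient.mk R z⟩
    omega
  omega

theorem cc_pos {l : ℕ} [NeZero l] (τ : Perm (Fin l)) : 0 < cycleCount τ := by
  have : Nonempty (Quotient (cycleSetoid τ)) :=
    ⟨Quotient.mk _ ⟨0, Nat.pos_of_ne_zero (NeZero.ne l)⟩⟩
  exact Nat.card_pos

theorem cc_one {l : ℕ} : cycleCount (1 : Perm (Fin l)) = l := by
  have e : Quotient (cycleSetoid (1 : Perm (Fin l))) ≃ Fin l := by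
    refine Equiv.ofBijective (Quotient.lift id (fun a b hab => ?_)) ⟨?_, ?_⟩
    · exact Equiv.Perm.sameCycle_one.mp hab
    · intro q1 q2 h
      induction q1 using Quotient.inductionOn with
      | h a =>
      induction q2 using Quotient.inductionOn with
      | h b => exact Quotient.sound (Equiv.Perm.sameCycle_one.mpr (by simpa using h))
    · intro x; exact ⟨Quotient.mk _ x, rfl⟩
  rw [cycleCount, Nat.card_congr e, Nat.card_eq_fintype_card, Fintype.card_fin]

theorem cc_inv {l : ℕ} (τ : Perm (Fin l)) : cycleCount τ⁻¹ = cycleCount τ := by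
  apply Nat.card_congr
  exact Quotient.congr (Equiv.refl _) (fun a b =>
    (Equiv.Perm.sameCycle_inv (f := τ) (x := a) (y := b)))

theorem cc_finRotate {l : ℕ} [NeZero l] : cycleCount (finRotate l) = 1 := by
  rcases l with _ | _ | n
  · exact absurd rfl (NeZero.ne 0)
  · -- l = 1
    have : (finRotate 1) = 1 := Subsingleton.elim _ _
    rw [this]; exact cc_one
  · -- l = n + 2
    have hc := isCycle_finRotate (n := n)
    have hns : ∀ x : Fin (n+2), finRotate (n+2) x ≠ x := by
      intro x h
      rw [finRotate_succ_apply] at h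
      have h1 : x + 1 = x + 0 := by rw [add_zero]; exact h
      have h2 : (1 : Fin (n+2)) = 0 := add_left_cancel h1
      have := congrArg Fin.val h2
      simp [Fin.val_one] at this
    have : Subsingleton (Quotient (cycleSetoid (finRotate (n+2)))) := by
      constructor
      intro q1 q2
      induction q1 using Quotient.inductionOn with
      | h a =>
      induction q2 using Quotient.inductionOn with
      | h b => exact Quotient.sound (hc.sameCycle (hns a) (hns b))
    have hne : Nonempty (Quotient (cycleSetoid (finRotate (n+2)))) := ⟨Quotient.mk _ 0⟩
    rw [cycleCount, Nat.card_eq_one_iff_unique]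
    exact ⟨this, hne⟩



section contraction
variable {l : ℕ} (τ : Perm (Fin l)) (y : Fin l)

theorem mu_apply_y : (τ * swap y (τ y)) y = τ (τ y) := by
  simp [Equiv.Perm.mul_apply]

theorem mu_apply_z : (τ * swap y (τ y)) (τ y) = τ y := by
  simp [Equiv.Perm.mul_apply]

theorem mu_apply_other {x : Fin l} (hx : x ≠ y) (hx' : x ≠ τ y) :
    (τ * swap y (τ y)) x = τ x := by
  simp [Equiv.Perm.mul_apply, swap_apply_of_ne_of_ne hx hx']

variable {τ y}

theorem mu_ne_z {x : Fin l} (hx : x ≠ τ y) :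
    (τ * swap y (τ y)) x ≠ τ y := by
  intro h
  have h2 : (τ * swap y (τ y)) x = (τ * swap y (τ y)) (τ y) := h.trans (mu_apply_z τ y).symm
  exact hx ((τ * swap y (τ y)).injective h2)

theorem sc_mu_of_sc (hy : τ y ≠ y) {a b : Fin l} (ha : a ≠ τ y)
    (h : ((τ * swap y (τ y)) : Perm (Fin l)).SameCycle a b) : τ.SameCycle a b := by
  obtain ⟨k, rfl⟩ := (sc_pow_iff (τ * swap y (τ y))).mp h
  clear h
  induction k with
  | zero => exact Equiv.Perm.SameCycle.refl _ _
  | succ k ih =>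
    have hb : ∀ m : ℕ, ((τ * swap y (τ y)) ^ m) a ≠ τ y := by
      intro m
      induction m with
      | zero => simpa using ha
      | succ m ih2 => rw [pow_succ', Equiv.Perm.mul_apply]; exact mu_ne_z ih2
    have step : τ.SameCycle (((τ * swap y (τ y)) ^ k) a)
        ((τ * swap y (τ y)) (((τ * swap y (τ y)) ^ k) a)) := by
      rcases eq_or_ne (((τ * swap y (τ y)) ^ k) a) y with hby | hby
      · rw [hby, mu_apply_y]
        exact Equiv.Perm.SameCycle.trans ⟨1, rfl⟩ ⟨1, rfl⟩
      · rw [mu_apply_other τ y hby (hb k)]; exact ⟨1, rfl⟩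
    rw [pow_succ', Equiv.Perm.mul_apply]
    exact ih.trans step

theorem sc_of_sc_mu (hy : τ y ≠ y) {a : Fin l} (ha : a ≠ τ y) :
    ∀ k, (τ ^ k) a ≠ τ y → ((τ * swap y (τ y)) : Perm (Fin l)).SameCycle a ((τ ^ k) a) := by
  intro k
  induction k using Nat.strong_induction_on with
  | _ k ih =>
    match k with
    | 0 => intro _; exact Equiv.Perm.SameCycle.refl _ _
    | Nat.succ k =>
      intro hk1
      rcases eq_or_ne ((τ ^ k) a) (τ y) with hz | hz
      · have hk0 : k ≠ 0 := by rintro rfl; exact ha (by simpa using hz)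
        obtain ⟨k', rfl⟩ := Nat.exists_eq_succ_of_ne_zero hk0
        have hky : (τ ^ k') a = y := by
          apply τ.injective
          rw [← Equiv.Perm.mul_apply, ← pow_succ']
          exact hz
        have ihk : ((τ * swap y (τ y)) : Perm (Fin l)).SameCycle a ((τ ^ k') a) :=
          ih k' (by omega) (by rw [hky]; exact fun hyy => hy hyy.symm)
        have hstep : (τ * swap y (τ y)) ((τ ^ k') a) = (τ ^ (k' + 1 + 1)) a := by
          rw [hky, mu_apply_y]
          rw [pow_succ', Equiv.Perm.mul_apply, pow_succ', Equiv.Perm.mul_apply, hky]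
        exact ihk.trans (hstep ▸ ⟨1, rfl⟩)
      · have ihk := ih k (Nat.lt_succ_self k) hz
        rcases eq_or_ne ((τ ^ k) a) y with hy2 | hy2
        · exfalso
          rw [pow_succ', Equiv.Perm.mul_apply, hy2] at hk1
          exact hk1 rfl
        · have hstep : (τ * swap y (τ y)) ((τ ^ k) a) = (τ ^ (k+1)) a := by
            rw [mu_apply_other τ y hy2 hz, pow_succ', Equiv.Perm.mul_apply]
          exact ihk.trans (hstep ▸ ⟨1, rfl⟩)

theorem sc_mu_iff (hy : τ y ≠ y) {a b : Fin l} (ha : a ≠ τ y) (hb : b ≠ τ y) :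
    ((τ * swap y (τ y)) : Perm (Fin l)).SameCycle a b ↔ τ.SameCycle a b := by
  constructor
  · exact sc_mu_of_sc hy ha
  · intro h
    obtain ⟨k, rfl⟩ := (sc_pow_iff τ).mp h
    exact sc_of_sc_mu hy ha k hb

/-- replacing `z := τ y` by `y` stays in the same `τ`-cycle -/
theorem sc_repl (hy : τ y ≠ y) (a : Fin l) :
    τ.SameCycle a (if a = τ y then y else a) := by
  split
  · next h =>
    subst h
    exact Equiv.Perm.SameCycle.symm (⟨1, rfl⟩ : τ.SameCycle y (τ y))
  · exact Equiv.Perm.SameCycle.refl _ _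

theorem cc_mu (hy : τ y ≠ y) :
    cycleCount (τ * swap y (τ y)) = cycleCount τ + 1 := by
  apply card_quot_succ (cycleSetoid (τ * swap y (τ y))) (cycleSetoid τ) (τ y)
    (fun a => if a = τ y then y else a)
  · intro b; split
    · exact fun h => hy h.symm
    · next h => exact h
  · intro a
    exact sc_fixed (mu_apply_z τ y)
  · intro a b
    have ha' : (if a = τ y then y else a) ≠ τ y := by
      split
      · exact fun h => hy h.symm
      · next h => exact h
    have hb' : (if b = τ y then y else b) ≠ τ y := by
      split
      · exact fun h => hy h.symm
      · next h => exact h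
    show τ.SameCycle a b ↔ _
    rw [show ((cycleSetoid (τ * swap y (τ y))).r = (τ * swap y (τ y)).SameCycle) from rfl,
      sc_mu_iff hy ha' hb']
    constructor
    · intro h
      exact ((sc_repl hy a).symm.trans h).trans (sc_repl hy b)
    · intro h
      exact ((sc_repl hy a).trans h).trans (sc_repl hy b).symm
  · intro a ha
    refine ⟨a, ?_⟩
    show ((τ * swap y (τ y)) : Perm (Fin l)).SameCycle _ a
    simp only [if_neg ha]
    exact Equiv.Perm.SameCycle.refl _ _

/-- absorbing a fixed point: `σ a = a`, `b ≠ a`, then `swap a b * σ` merges. -/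
theorem cc_swap_mul (σ : Perm (Fin l)) {a b : Fin l} (hσ : σ a = a) (hab : b ≠ a) :
    cycleCount σ = cycleCount (swap a b * σ) + 1 := by
  have h1 : (swap a b * σ)⁻¹ b = a := by
    rw [mul_inv_rev, Equiv.Perm.mul_apply, swap_inv, swap_apply_right]
    exact σ.injective (by rw [Equiv.Perm.coe_inv, Equiv.apply_symm_apply, hσ])
  have h2 := cc_mu (τ := (swap a b * σ)⁻¹) (y := b) (by rw [h1]; exact Ne.symm hab)
  rw [h1] at h2
  have h3 : (swap a b * σ)⁻¹ * swap b a = σ⁻¹ := by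
    rw [mul_inv_rev, swap_inv, swap_comm a b, mul_assoc, swap_mul_self, mul_one]
  rw [h3, cc_inv, cc_inv] at h2
  exact h2

end contraction


section deletion
variable {n : ℕ}

theorem val_add_one_mod {m : ℕ} (x : Fin (m+1)) : ((x + 1 : Fin (m+1))).val = (x.val + 1) % (m+1) := by
  rw [Fin.add_def, Fin.val_one', Nat.add_mod x.val 1 (m+1), Nat.mod_eq_of_lt x.isLt]

theorem rot_val {m : ℕ} (x : Fin (m+1)) : (finRotate (m+1) x).val = (x.val + 1) % (m+1) := by
  rw [finRotate_succ_apply, val_add_one_mod]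

theorem inv_fix {τ : Perm (Fin (n+1))} (hτ : τ (Fin.last n) = Fin.last n) :
    τ⁻¹ (Fin.last n) = Fin.last n := by
  conv_lhs => rw [← hτ]
  rw [Equiv.Perm.coe_inv, Equiv.symm_apply_apply]

theorem apply_castSucc_ne_last {τ : Perm (Fin (n+1))} (hτ : τ (Fin.last n) = Fin.last n)
    (x : Fin n) : τ x.castSucc ≠ Fin.last n := by
  intro h
  rw [← hτ] at h
  exact (Fin.castSucc_lt_last x).ne (τ.injective h)

/-- deletion of the fixed point `last` -/
def down (τ : Perm (Fin (n+1))) (hτ : τ (Fin.last n) = Fin.last n) : Perm (Fin n) where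
  toFun x := (τ x.castSucc).castPred (apply_castSucc_ne_last hτ x)
  invFun x := (τ⁻¹ x.castSucc).castPred (apply_castSucc_ne_last (inv_fix hτ) x)
  left_inv x := by simp
  right_inv x := by simp

theorem down_castSucc {τ : Perm (Fin (n+1))} (hτ : τ (Fin.last n) = Fin.last n) (x : Fin n) :
    ((down τ hτ) x).castSucc = τ x.castSucc := by
  simp [down]

theorem down_inv {τ : Perm (Fin (n+1))} (hτ : τ (Fin.last n) = Fin.last n) :
    (down τ hτ)⁻¹ = down τ⁻¹ (inv_fix hτ) :=
  rfl

theorem down_pow {τ : Perm (Fin (n+1))} (hτ : τ (Fin.last n) = Fin.last n) (k : ℕ) (x : Fin n) :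
    (((down τ hτ) ^ k) x).castSucc = (τ ^ k) x.castSucc := by
  induction k with
  | zero => simp
  | succ k ih =>
    rw [pow_succ', pow_succ', Equiv.Perm.mul_apply, Equiv.Perm.mul_apply, down_castSucc, ih]

theorem sc_down_iff {τ : Perm (Fin (n+1))} (hτ : τ (Fin.last n) = Fin.last n) {a b : Fin n} :
    (down τ hτ).SameCycle a b ↔ τ.SameCycle a.castSucc b.castSucc := by
  rw [sc_pow_iff, sc_pow_iff]
  constructor
  · rintro ⟨k, rfl⟩; exact ⟨k, (down_pow hτ k a).symm⟩
  · rintro ⟨k, hk⟩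
    refine ⟨k, Fin.castSucc_injective n ?_⟩
    rw [down_pow hτ k a, hk]

theorem cc_down {τ : Perm (Fin (n+1))} (hτ : τ (Fin.last n) = Fin.last n) :
    cycleCount τ = cycleCount (down τ hτ) + 1 := by
  apply card_quot_succ (cycleSetoid τ) (cycleSetoid (down τ hτ)) (Fin.last n) Fin.castSucc
  · exact fun b => (Fin.castSucc_lt_last b).ne
  · exact fun a => sc_fixed hτ
  · exact fun a b => sc_down_iff hτ
  · intro a ha
    exact ⟨a.castPred ha, by rw [show ((a.castPred ha).castSucc) = a from Fin.castSucc_castPred a ha]⟩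

variable [NeZero n]

/-- the distinguished point `w = n-1` (as an element of `Fin (n+1)`). -/
def wpt (n : ℕ) [NeZero n] : Fin (n+1) := ⟨n-1, by omega⟩

theorem wpt_add_one : wpt n + 1 = Fin.last n := by
  have hn : 0 < n := Nat.pos_of_ne_zero (NeZero.ne n)
  apply Fin.ext
  rw [val_add_one_mod]
  show (n - 1 + 1) % (n+1) = n
  rw [Nat.sub_add_cancel hn, Nat.mod_eq_of_lt (by omega)]

theorem taubar_w (τ : Perm (Fin (n+1))) (hτ : τ (Fin.last n) = Fin.last n) :
    (τ⁻¹ * finRotate (n+1)) (wpt n) = Fin.last n := by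
  rw [Equiv.Perm.mul_apply, finRotate_succ_apply, wpt_add_one, inv_fix hτ]

theorem wpt_ne_last : wpt n ≠ Fin.last n := by
  have hn : 0 < n := Nat.pos_of_ne_zero (NeZero.ne n)
  intro h
  have := congrArg Fin.val h
  simp [wpt, Fin.last] at this
  omega

theorem taubar_w_ne (τ : Perm (Fin (n+1))) (hτ : τ (Fin.last n) = Fin.last n) :
    (τ⁻¹ * finRotate (n+1)) (wpt n) ≠ wpt n := by
  rw [taubar_w τ hτ]
  exact fun h => wpt_ne_last h.symm

theorem Kfix (τ : Perm (Fin (n+1))) (hτ : τ (Fin.last n) = Fin.last n) :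
    ((τ⁻¹ * finRotate (n+1)) * swap (wpt n) ((τ⁻¹ * finRotate (n+1)) (wpt n)))
      (Fin.last n) = Fin.last n := by
  rw [show ((τ⁻¹ * finRotate (n+1)) (wpt n)) = Fin.last n from taubar_w τ hτ]
  rw [Equiv.Perm.mul_apply, swap_apply_right, taubar_w τ hτ]

/-- the key identity: deleting `last` intertwines the complements. -/
theorem down_rotate (τ : Perm (Fin (n+1))) (hτ : τ (Fin.last n) = Fin.last n) :
    (down τ hτ)⁻¹ * finRotate n =
      down ((τ⁻¹ * finRotate (n+1)) * swap (wpt n) ((τ⁻¹ * finRotate (n+1)) (wpt n)))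
        (Kfix τ hτ) := by
  have hn : 0 < n := Nat.pos_of_ne_zero (NeZero.ne n)
  apply Equiv.ext
  intro x
  apply Fin.castSucc_injective
  rw [down_castSucc]
  rw [Equiv.Perm.mul_apply, Equiv.Perm.mul_apply, Equiv.Perm.mul_apply]
  rw [down_inv, down_castSucc]
  congr 1
  -- goal: castSucc (finRotate n x) = finRotate (n+1) (swap (wpt n) _ (castSucc x))
  rw [show ((τ⁻¹ * finRotate (n+1)) (wpt n)) = Fin.last n from taubar_w τ hτ]
  obtain ⟨m, rfl⟩ := Nat.exists_eq_succ_of_ne_zero (NeZero.ne n)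
  rcases eq_or_ne (x.castSucc) (wpt (m+1)) with hx | hx
  · rw [hx, swap_apply_left]
    have hxval : x.val = m := by
      have := congrArg Fin.val hx
      simpa [wpt] using this
    apply Fin.ext
    rw [Fin.coe_castSucc, rot_val, rot_val, hxval]
    have hlv : (Fin.last (m+1)).val = m + 1 := rfl
    rw [hlv, Nat.mod_self, Nat.mod_self]
  · rw [swap_apply_of_ne_of_ne hx (fun h => (Fin.castSucc_lt_last x).ne h)]
    apply Fin.ext
    rw [Fin.coe_castSucc, rot_val, rot_val, Fin.coe_castSucc]
    have hxval : x.val ≠ m := by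
      intro h
      exact hx (Fin.ext (by simp [wpt, h]))
    have hxlt := x.isLt
    rw [Nat.mod_eq_of_lt (by omega), Nat.mod_eq_of_lt (by omega)]

end deletion


def Aligned {l : ℕ} [NeZero l] (τ : Perm (Fin l)) : Prop :=
  ∀ i j, τ.SameCycle i j → j ≠ i → dd i (τ i) ≤ dd i j

def Cross {l : ℕ} [NeZero l] (τ : Perm (Fin l)) : Prop :=
  ∃ a b c d : Fin l, 0 < dd a b ∧ dd a b < dd a c ∧ dd a c < dd a d ∧
    τ.SameCycle a c ∧ τ.SameCycle b d ∧ ¬ τ.SameCycle a b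

section rotation
variable {l : ℕ} [NeZero l]

/-- translation by `k` as a permutation -/
def tk (k : Fin l) : Perm (Fin l) := Equiv.addRight k

theorem tk_apply (k x : Fin l) : tk k x = x + k := rfl

theorem tk_inv_apply (k x : Fin l) : (tk k)⁻¹ x = x - k := by
  rw [Equiv.Perm.inv_eq_iff_eq, tk_apply, sub_add_cancel]

/-- the rotation conjugate -/
def rotc (k : Fin l) (τ : Perm (Fin l)) : Perm (Fin l) := (tk k)⁻¹ * τ * tk k

theorem rotc_apply (k : Fin l) (τ : Perm (Fin l)) (x : Fin l) :
    rotc k τ x = τ (x + k) - k := by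
  rw [rotc, Equiv.Perm.mul_apply, Equiv.Perm.mul_apply, tk_apply, tk_inv_apply]

theorem sc_rotc (k : Fin l) (τ : Perm (Fin l)) (x y : Fin l) :
    (rotc k τ).SameCycle x y ↔ τ.SameCycle (x + k) (y + k) := by
  have h : rotc k τ = (tk k)⁻¹ * τ * ((tk k)⁻¹)⁻¹ := by rw [inv_inv]; rfl
  rw [h, Equiv.Perm.sameCycle_conj, inv_inv]
  rfl

theorem cc_conj {m : ℕ} (g τ : Perm (Fin m)) : cycleCount (g * τ * g⁻¹) = cycleCount τ := by
  symm
  apply Nat.card_congr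
  refine Quotient.congr g (fun a b => ?_)
  show τ.SameCycle a b ↔ (g * τ * g⁻¹).SameCycle (g a) (g b)
  rw [Equiv.Perm.sameCycle_conj, Equiv.Perm.coe_inv, Equiv.symm_apply_apply, Equiv.symm_apply_apply]

theorem cc_rotc (k : Fin l) (τ : Perm (Fin l)) : cycleCount (rotc k τ) = cycleCount τ := by
  have : rotc k τ = (tk k)⁻¹ * τ * ((tk k)⁻¹)⁻¹ := by rw [inv_inv]; rfl
  rw [this, cc_conj]

theorem rho_tk_comm (k : Fin l) : finRotate l * tk k = tk k * finRotate l := by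
  apply Equiv.ext
  intro x
  obtain ⟨m, rfl⟩ : ∃ m, l = m + 1 :=
    ⟨l - 1, (Nat.succ_pred_eq_of_pos (Nat.pos_of_ne_zero (NeZero.ne l))).symm⟩
  show finRotate (m+1) (x + k) = (finRotate (m+1) x) + k
  rw [finRotate_succ_apply, finRotate_succ_apply, add_right_comm]

theorem rotc_bar (k : Fin l) (τ : Perm (Fin l)) :
    (rotc k τ)⁻¹ * finRotate l = rotc k (τ⁻¹ * finRotate l) := by
  rw [rotc, rotc, mul_inv_rev, mul_inv_rev, inv_inv]
  simp only [mul_assoc]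
  congr 1
  congr 1
  exact (rho_tk_comm k).symm

theorem aligned_rotc (k : Fin l) (τ : Perm (Fin l)) :
    Aligned (rotc k τ) ↔ Aligned τ := by
  constructor
  · intro h i j hsc hne
    have h2 := h (i - k) (j - k) (by rw [sc_rotc, sub_add_cancel, sub_add_cancel]; exact hsc)
      (by intro hh; exact hne (by have := congrArg (· + k) hh; simpa using this))
    rw [rotc_apply, sub_add_cancel] at h2
    calc dd i (τ i) = dd (i - k) (τ i - k) := by
          rw [← dd_add_right (i-k) (τ i - k) k, sub_add_cancel, sub_add_cancel]
      _ ≤ dd (i - k) (j - k) := h2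
      _ = dd i j := by rw [← dd_add_right (i-k) (j-k) k, sub_add_cancel, sub_add_cancel]
  · intro h i j hsc hne
    have h2 := h (i + k) (j + k) (by rw [sc_rotc] at hsc; exact hsc)
      (by intro hh; exact hne (add_right_cancel hh))
    rw [rotc_apply]
    calc dd i (τ (i+k) - k) = dd (i + k) (τ (i + k)) := by
          rw [← dd_add_right i (τ (i+k) - k) k, sub_add_cancel]
      _ ≤ dd (i+k) (j+k) := h2
      _ = dd i j := dd_add_right i j k

theorem cross_rotc (k : Fin l) (τ : Perm (Fin l)) :
    Cross (rotc k τ) ↔ Cross τ := by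
  constructor
  · rintro ⟨a, b, c, d, h1, h2, h3, h4, h5, h6⟩
    refine ⟨a + k, b + k, c + k, d + k, ?_, ?_, ?_, ?_, ?_, ?_⟩
    · rwa [dd_add_right]
    · rwa [dd_add_right, dd_add_right]
    · rwa [dd_add_right, dd_add_right]
    · rwa [sc_rotc] at h4
    · rwa [sc_rotc] at h5
    · intro hc; exact h6 ((sc_rotc k τ a b).mpr hc)
  · rintro ⟨a, b, c, d, h1, h2, h3, h4, h5, h6⟩
    refine ⟨a - k, b - k, c - k, d - k, ?_, ?_, ?_, ?_, ?_, ?_⟩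
    · rw [show a - k = a - k from rfl]
      have : dd (a-k) (b-k) = dd a b := by
        rw [← dd_add_right (a-k) (b-k) k, sub_add_cancel, sub_add_cancel]
      rwa [this]
    · have e1 : dd (a-k) (b-k) = dd a b := by
        rw [← dd_add_right (a-k) (b-k) k, sub_add_cancel, sub_add_cancel]
      have e2 : dd (a-k) (c-k) = dd a c := by
        rw [← dd_add_right (a-k) (c-k) k, sub_add_cancel, sub_add_cancel]
      rw [e1, e2]; exact h2
    · have e2 : dd (a-k) (c-k) = dd a c := by
        rw [← dd_add_right (a-k) (c-k) k, sub_add_cancel, sub_add_cancel]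
      have e3 : dd (a-k) (d-k) = dd a d := by
        rw [← dd_add_right (a-k) (d-k) k, sub_add_cancel, sub_add_cancel]
      rw [e2, e3]; exact h3
    · rw [sc_rotc, sub_add_cancel, sub_add_cancel]; exact h4
    · rw [sc_rotc, sub_add_cancel, sub_add_cancel]; exact h5
    · rw [sc_rotc, sub_add_cancel, sub_add_cancel]; exact h6

end rotation


section move2
variable {l : ℕ} [NeZero l]

theorem dd_succ_r {i y : Fin l} (h : y + 1 ≠ i) : dd i (y + 1) = dd i y + 1 := by
  have ht := add_dd i y
  have hlt := dd_lt i y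
  have h2 : y + 1 = i + ((dd i y + 1 : ℕ) : Fin l) := by
    rw [Nat.cast_add, Nat.cast_one, ← add_assoc, ht]
  rcases Nat.lt_or_ge (dd i y + 1) l with hlt2 | hge
  · rw [h2, dd_add_nat, Nat.mod_eq_of_lt hlt2]
  · exfalso
    apply h
    have hle : dd i y + 1 = l := by omega
    rw [h2, hle, Fin.natCast_self, add_zero]

theorem dd_succ_left {y x : Fin l} (hyx : x ≠ y) (h1 : y + 1 ≠ y) :
    dd y x = dd (y + 1) x + 1 := by
  have e1 : dd y (y + 1) = 1 := dd_add_one y h1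
  have e2 : 0 < dd y x := by
    rcases Nat.eq_zero_or_pos (dd y x) with h | h
    · exact absurd (dd_eq_zero_iff.mp h).symm hyx
    · exact h
  have := dd_sub (a := y) (x := y + 1) (b := x) (by omega)
  omega

theorem dd_pred {y : Fin l} (h1 : y + 1 ≠ y) : dd (y + 1) y = l - 1 := by
  have hl : 0 < l := Nat.pos_of_ne_zero (NeZero.ne l)
  have key : (y + 1) + ((l - 1 : ℕ) : Fin l) = y := by
    rw [add_assoc, show (1 : Fin l) + ((l - 1 : ℕ) : Fin l) = 0 by
      rw [← Nat.cast_one, ← Nat.cast_add, show 1 + (l - 1) = l by omega, Fin.natCast_self]]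
    rw [add_zero]
  have h2 := dd_add_nat (y + 1) (l - 1)
  rw [key, Nat.mod_eq_of_lt (by omega)] at h2
  exact h2

theorem sc_pair {τ : Perm (Fin l)} {a b j : Fin l} (hab : τ a = b) (hba : τ b = a)
    (h : τ.SameCycle a j) : j = a ∨ j = b := by
  obtain ⟨k, rfl⟩ := (sc_pow_iff τ).mp h
  clear h
  induction k with
  | zero => exact Or.inl rfl
  | succ k ih =>
    rw [pow_succ', Equiv.Perm.mul_apply]
    rcases ih with h | h
    · rw [h, hab]; exact Or.inr rfl
    · rw [h, hba]; exact Or.inl rfl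

variable {τ : Perm (Fin l)} {y : Fin l} (hz : τ y = y + 1) (hyz : y + 1 ≠ y)

include hz hyz

theorem hy_ne : τ y ≠ y := by rw [hz]; exact hyz

theorem aligned_move2_fwd (hAl : Aligned τ) : Aligned (τ * swap y (τ y)) := by
  intro i j hsc hne
  have hy := hy_ne hz hyz
  have hiz : i ≠ τ y := by
    rintro rfl
    exact hne ((sc_fixed (mu_apply_z τ y)).mp hsc)
  have hjz : j ≠ τ y := by
    rintro rfl
    exact hiz ((sc_fixed (mu_apply_z τ y)).mp hsc.symm)
  have hτij : τ.SameCycle i j := (sc_mu_iff hy hiz hjz).mp hsc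
  rcases eq_or_ne y i with rfl | hiy
  · rw [mu_apply_y]
    rcases eq_or_ne (τ (τ y)) y with he | he
    · rw [he, dd_self]; exact Nat.zero_le _
    · have hsczj : τ.SameCycle (τ y) j :=
        (Equiv.Perm.SameCycle.symm ⟨1, rfl⟩ : τ.SameCycle (τ y) y).trans hτij
      have ha := hAl (τ y) j hsczj hjz
      rw [hz] at ha he ⊢
      have e1 := dd_succ_left he hyz
      have e2 : dd y j = dd (y + 1) j + 1 := dd_succ_left (hne : j ≠ y) hyz
      omega
  · rw [mu_apply_other τ y (Ne.symm hiy) hiz]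
    exact hAl i j hτij hne

theorem aligned_move2_bwd (hAl : Aligned (τ * swap y (τ y))) : Aligned τ := by
  have hy := hy_ne hz hyz
  intro i j hsc hne
  rcases eq_or_ne y i with rfl | hiy
  · rw [hz, dd_add_one y hyz]
    have : dd y j ≠ 0 := fun h => hne ((dd_eq_zero_iff.mp h).symm)
    omega
  rcases eq_or_ne i (τ y) with rfl | hiz
  · rcases eq_or_ne (τ (τ y)) y with he | he
    · rcases sc_pair he rfl hsc with h | h
      · exact absurd h hne
      · rw [he, h]
    · rcases eq_or_ne y j with rfl | hjy
      · have hd := dd_lt (τ y) (τ (τ y))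
        rw [hz] at hd ⊢
        rw [dd_pred hyz]
        omega
      · have hsc2 : ((τ * swap y (τ y)) : Perm (Fin l)).SameCycle y j := by
          rw [sc_mu_iff hy (Ne.symm hy) (hne : j ≠ τ y)]
          exact Equiv.Perm.SameCycle.trans (⟨1, rfl⟩ : τ.SameCycle y (τ y)) hsc
        have ha := hAl y j hsc2 (Ne.symm hjy)
        rw [mu_apply_y] at ha
        rw [hz] at ha he ⊢
        have e1 := dd_succ_left he hyz
        have e2 : dd y j = dd (y + 1) j + 1 := dd_succ_left (Ne.symm hjy) hyz
        omega
  · rcases eq_or_ne j (τ y) with rfl | hjz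
    · have hsc2 : ((τ * swap y (τ y)) : Perm (Fin l)).SameCycle i y := by
        rw [sc_mu_iff hy hiz (Ne.symm hy)]
        exact hsc.trans (Equiv.Perm.SameCycle.symm ⟨1, rfl⟩)
      have ha := hAl i y hsc2 hiy
      rw [mu_apply_other τ y (Ne.symm hiy) hiz] at ha
      have e3 : dd i (τ y) = dd i y + 1 := by
        rw [hz]
        exact dd_succ_r (by rw [← hz]; exact Ne.symm hiz)
      omega
    · have ha := hAl i j ((sc_mu_iff hy hiz hjz).mpr hsc) hne
      rw [mu_apply_other τ y (Ne.symm hiy) hiz] at ha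
      exact ha

end move2


section move2c
variable {l : ℕ} [NeZero l] {τ : Perm (Fin l)} {y : Fin l}
  (hz : τ y = y + 1) (hyz : y + 1 ≠ y)

include hz hyz

theorem hy_ne' : τ y ≠ y := by rw [hz]; exact hyz

theorem cross_move2_bwd (h : Cross (τ * swap y (τ y))) : Cross τ := by
  have hy := hy_ne' hz hyz
  obtain ⟨a, b, c, d, h1, h2, h3, hac, hbd, hnab⟩ := h
  have hane : a ≠ c := fun h => by
    subst h; rw [dd_eq_zero_iff.mpr rfl] at h2; omega
  have hbne : b ≠ d := fun h => by subst h; omega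
  have haz : a ≠ τ y := by
    rintro rfl
    exact hane ((sc_fixed (mu_apply_z τ y)).mp hac).symm
  have hcz : c ≠ τ y := by
    rintro rfl
    exact hane ((sc_fixed (mu_apply_z τ y)).mp hac.symm)
  have hbz : b ≠ τ y := by
    rintro rfl
    exact hbne ((sc_fixed (mu_apply_z τ y)).mp hbd).symm
  have hdz : d ≠ τ y := by
    rintro rfl
    exact hbne ((sc_fixed (mu_apply_z τ y)).mp hbd.symm)
  exact ⟨a, b, c, d, h1, h2, h3, (sc_mu_iff hy haz hcz).mp hac,
    (sc_mu_iff hy hbz hdz).mp hbd, fun hc => hnab ((sc_mu_iff hy haz hbz).mpr hc)⟩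

theorem cross_move2_fwd (h : Cross τ) : Cross (τ * swap y (τ y)) := by
  have hy := hy_ne' hz hyz
  obtain ⟨a, b, c, d, h1, h2, h3, hac, hbd, hnab⟩ := h
  have hyscz : τ.SameCycle y (τ y) := ⟨1, rfl⟩
  have hab : a ≠ b := fun h => by subst h; rw [dd_eq_zero_iff.mpr rfl] at h1; omega
  have hane : a ≠ c := fun h => by subst h; rw [dd_eq_zero_iff.mpr rfl] at h2; omega
  have had : a ≠ d := fun h => by subst h; rw [dd_eq_zero_iff.mpr rfl] at h3; omega
  have hbc : b ≠ c := fun h => by subst h; omega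
  have hbdne : b ≠ d := fun h => by subst h; omega
  have hcd : c ≠ d := fun h => by subst h; omega
  rcases eq_or_ne a (τ y) with rfl | haz
  · -- a = z ; replace a by y
    have hby : b ≠ y := by
      intro h
      exact hnab (by rw [h]; exact hyscz.symm)
    have hcy : c ≠ y := by
      intro h
      rw [h] at h2 h3
      have e1 : dd (τ y) y = l - 1 := by rw [hz]; exact dd_pred hyz
      have := dd_lt (τ y) d
      omega
    have hdy : d ≠ y := by
      intro h
      rw [h] at hbd
      exact hnab (Equiv.Perm.SameCycle.trans hyscz.symm hbd.symm)
    have e1 : dd y b = dd (τ y) b + 1 := by rw [hz]; exact dd_succ_left hby hyz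
    have e2 : dd y c = dd (τ y) c + 1 := by rw [hz]; exact dd_succ_left hcy hyz
    have e3 : dd y d = dd (τ y) d + 1 := by rw [hz]; exact dd_succ_left hdy hyz
    refine ⟨y, b, c, d, by omega, by omega, by omega, ?_, ?_, ?_⟩
    · exact (sc_mu_iff hy (Ne.symm hy) (Ne.symm hane)).mpr
        (Equiv.Perm.SameCycle.trans hyscz hac)
    · exact (sc_mu_iff hy (Ne.symm hab) (Ne.symm had)).mpr hbd
    · intro hcμ
      exact hnab (Equiv.Perm.SameCycle.trans hyscz.symm
        ((sc_mu_iff hy (Ne.symm hy) (Ne.symm hab)).mp hcμ))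
  rcases eq_or_ne b (τ y) with rfl | hbz
  · -- b = z ; replace b by y
    have hya : y ≠ a := by
      intro h
      apply hnab
      rw [← h]
      exact hyscz
    have e0 : dd a (τ y) = dd a y + 1 := by
      rw [hz]; exact dd_succ_r (by rw [← hz]; exact Ne.symm hab)
    have hpos : dd a y ≠ 0 := fun h => hya (dd_eq_zero_iff.mp h).symm
    refine ⟨a, y, c, d, by omega, by omega, by omega, ?_, ?_, ?_⟩
    · exact (sc_mu_iff hy hab (Ne.symm hbc)).mpr hac
    · exact (sc_mu_iff hy (Ne.symm hy) (Ne.symm hbdne)).mpr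
        (Equiv.Perm.SameCycle.trans hyscz hbd)
    · intro hcμ
      exact hnab (Equiv.Perm.SameCycle.trans
        ((sc_mu_iff hy hab (Ne.symm hy)).mp hcμ) hyscz)
  rcases eq_or_ne c (τ y) with rfl | hcz
  · -- c = z ; replace c by y
    have hyb : y ≠ b := by
      intro h
      apply hnab
      exact Equiv.Perm.SameCycle.trans hac (by rw [← h]; exact hyscz.symm)
    have e0 : dd a (τ y) = dd a y + 1 := by
      rw [hz]; exact dd_succ_r (by rw [← hz]; exact Ne.symm hane)
    have hstrict : dd a b ≠ dd a y := fun h => hyb (dd_inj h).symm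
    refine ⟨a, b, y, d, by omega, by omega, by omega, ?_, ?_, ?_⟩
    · exact (sc_mu_iff hy hane (Ne.symm hy)).mpr (Equiv.Perm.SameCycle.trans hac hyscz.symm)
    · exact (sc_mu_iff hy hbc (Ne.symm hcd)).mpr hbd
    · intro hcμ
      exact hnab ((sc_mu_iff hy hane hbc).mp hcμ)
  rcases eq_or_ne d (τ y) with rfl | hdz
  · -- d = z ; replace d by y
    have hyc : y ≠ c := by
      intro h
      apply hnab
      refine Equiv.Perm.SameCycle.trans (Equiv.Perm.SameCycle.trans hac ?_) hbd.symm
      rw [← h]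
      exact hyscz
    have e0 : dd a (τ y) = dd a y + 1 := by
      rw [hz]; exact dd_succ_r (by rw [← hz]; exact Ne.symm had)
    have hstrict : dd a c ≠ dd a y := fun h => hyc (dd_inj h).symm
    refine ⟨a, b, c, y, by omega, by omega, by omega, ?_, ?_, ?_⟩
    · exact (sc_mu_iff hy had hcd).mpr hac
    · exact (sc_mu_iff hy hbdne (Ne.symm hy)).mpr
        (Equiv.Perm.SameCycle.trans hbd hyscz.symm)
    · intro hcμ
      exact hnab ((sc_mu_iff hy had hbdne).mp hcμ)
  · exact ⟨a, b, c, d, h1, h2, h3, (sc_mu_iff hy haz hcz).mpr hac,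
      (sc_mu_iff hy hbz hdz).mpr hbd, fun hcμ => hnab ((sc_mu_iff hy haz hbz).mp hcμ)⟩

end move2c


section deltrans
variable {n : ℕ} [NeZero n]

theorem dd_cs_le_iff (a x y : Fin n) :
    (dd a.castSucc x.castSucc ≤ dd a.castSucc y.castSucc ↔ dd a x ≤ dd a y) := by
  have ha := a.isLt; have hx := x.isLt; have hy := y.isLt
  rw [dd_val, dd_val, dd_val, dd_val]
  simp only [Fin.coe_castSucc]
  split_ifs <;> omega

theorem dd_cs_lt_iff (a x y : Fin n) :
    (dd a.castSucc x.castSucc < dd a.castSucc y.castSucc ↔ dd a x < dd a y) := by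
  have ha := a.isLt; have hx := x.isLt; have hy := y.isLt
  rw [dd_val, dd_val, dd_val, dd_val]
  simp only [Fin.coe_castSucc]
  split_ifs <;> omega

variable {τ : Perm (Fin (n+1))} (hτ : τ (Fin.last n) = Fin.last n)

include hτ

theorem ne_last_of_sc {i j : Fin (n+1)} (hsc : τ.SameCycle i j) (hne : j ≠ i) :
    i ≠ Fin.last n ∧ j ≠ Fin.last n := by
  constructor
  · rintro rfl
    exact hne ((sc_fixed hτ).mp hsc)
  · rintro rfl
    exact hne (((sc_fixed hτ).mp hsc.symm) ▸ rfl)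

theorem aligned_down_iff : Aligned τ ↔ Aligned (down τ hτ) := by
  constructor
  · intro hAl i j hsc hne
    have h2 := hAl i.castSucc j.castSucc ((sc_down_iff hτ).mp hsc)
      (fun h => hne (Fin.castSucc_injective n h))
    rw [← down_castSucc hτ i] at h2
    exact (dd_cs_le_iff i (down τ hτ i) j).mp h2
  · intro hAl i j hsc hne
    obtain ⟨hi, hj⟩ := ne_last_of_sc hτ hsc hne
    set i0 := i.castPred hi with hi0
    set j0 := j.castPred hj with hj0
    have hic : i0.castSucc = i := Fin.castSucc_castPred i hi
    have hjc : j0.castSucc = j := Fin.castSucc_castPred j hj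
    have hsc0 : (down τ hτ).SameCycle i0 j0 := by
      rw [sc_down_iff hτ, hic, hjc]; exact hsc
    have hne0 : j0 ≠ i0 := fun h => hne (by rw [← hic, ← hjc, h])
    have h2 := hAl i0 j0 hsc0 hne0
    have h3 := (dd_cs_le_iff i0 (down τ hτ i0) j0).mpr h2
    rw [down_castSucc hτ i0, hic, hjc] at h3
    exact h3

theorem cross_down_iff : Cross τ ↔ Cross (down τ hτ) := by
  constructor
  · rintro ⟨a, b, c, d, h1, h2, h3, hac, hbd, hnab⟩
    have hane : a ≠ c := fun h => by
      subst h; rw [show dd a a = 0 by simp [dd_val]] at h2; omega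
    have hbne : b ≠ d := fun h => by subst h; omega
    have ha : a ≠ Fin.last n := (ne_last_of_sc hτ hac (Ne.symm hane)).1
    have hc : c ≠ Fin.last n := (ne_last_of_sc hτ hac (Ne.symm hane)).2
    have hb : b ≠ Fin.last n := (ne_last_of_sc hτ hbd (Ne.symm hbne)).1
    have hd : d ≠ Fin.last n := (ne_last_of_sc hτ hbd (Ne.symm hbne)).2
    set a0 := a.castPred ha; set b0 := b.castPred hb
    set c0 := c.castPred hc; set d0 := d.castPred hd
    have hac' : a0.castSucc = a := Fin.castSucc_castPred a ha
    have hbc' : b0.castSucc = b := Fin.castSucc_castPred b hb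
    have hcc' : c0.castSucc = c := Fin.castSucc_castPred c hc
    have hdc' : d0.castSucc = d := Fin.castSucc_castPred d hd
    refine ⟨a0, b0, c0, d0, ?_, ?_, ?_, ?_, ?_, ?_⟩
    · have := (dd_cs_lt_iff a0 a0 b0).mp (by rw [hac', hbc']; simpa [dd_val] using h1)
      simpa [dd_val] using this
    · exact (dd_cs_lt_iff a0 b0 c0).mp (by rw [hac', hbc', hcc']; exact h2)
    · exact (dd_cs_lt_iff a0 c0 d0).mp (by rw [hac', hcc', hdc']; exact h3)
    · rw [sc_down_iff hτ, hac', hcc']; exact hac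
    · rw [sc_down_iff hτ, hbc', hdc']; exact hbd
    · rw [sc_down_iff hτ, hac', hbc']; exact hnab
  · rintro ⟨a, b, c, d, h1, h2, h3, hac, hbd, hnab⟩
    refine ⟨a.castSucc, b.castSucc, c.castSucc, d.castSucc, ?_, ?_, ?_, ?_, ?_, ?_⟩
    · have := (dd_cs_lt_iff a a b).mpr (by simpa [dd_val] using h1)
      simpa [dd_val] using this
    · exact (dd_cs_lt_iff a b c).mpr h2
    · exact (dd_cs_lt_iff a c d).mpr h3
    · exact (sc_down_iff hτ).mp hac
    · exact (sc_down_iff hτ).mp hbd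
    · intro h; exact hnab ((sc_down_iff hτ).mpr h)
end deltrans


section pigeon
variable {l : ℕ} [NeZero l]

theorem cc_le (σ : Perm (Fin l)) : cycleCount σ ≤ l := by
  have h := Nat.card_le_card_of_surjective (Quotient.mk (cycleSetoid σ))
    (Quotient.exists_rep)
  simpa [cycleCount] using h

theorem two_mul_cc_le (σ : Perm (Fin l)) (hfp : ∀ x, σ x ≠ x) :
    2 * cycleCount σ ≤ l := by
  classical
  haveI : Fintype (Quotient (cycleSetoid σ)) := Fintype.ofFinite _
  have hcard := Finset.card_eq_sum_card_fiberwise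
    (f := fun a => Quotient.mk (cycleSetoid σ) a) (s := Finset.univ) (t := Finset.univ)
    (fun x _ => Finset.mem_univ _)
  have h2 : ∀ q : Quotient (cycleSetoid σ),
      2 ≤ (Finset.univ.filter (fun a => Quotient.mk (cycleSetoid σ) a = q)).card := by
    intro q
    obtain ⟨x, rfl⟩ := Quotient.exists_rep q
    have hsub : ({x, σ x} : Finset (Fin l)) ⊆
        Finset.univ.filter (fun a => Quotient.mk (cycleSetoid σ) a = Quotient.mk _ x) := by
      intro t ht
      rw [Finset.mem_insert, Finset.mem_singleton] at ht
      rw [Finset.mem_filter]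
      refine ⟨Finset.mem_univ _, ?_⟩
      rcases ht with rfl | rfl
      · rfl
      · exact Quotient.sound (Equiv.Perm.SameCycle.symm ⟨1, rfl⟩)
    calc 2 = ({x, σ x} : Finset (Fin l)).card := (Finset.card_pair (fun h => hfp x h.symm)).symm
      _ ≤ _ := Finset.card_le_card hsub
  have hsum : ∑ q : Quotient (cycleSetoid σ), 2 ≤
      ∑ q : Quotient (cycleSetoid σ),
        (Finset.univ.filter (fun a => Quotient.mk (cycleSetoid σ) a = q)).card :=
    Finset.sum_le_sum (fun q _ => h2 q)
  rw [Finset.sum_const, Finset.card_univ, smul_eq_mul] at hsum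
  have hcard' : l = ∑ q : Quotient (cycleSetoid σ),
      (Finset.univ.filter (fun a => Quotient.mk (cycleSetoid σ) a = q)).card := by
    simpa using hcard
  rw [cycleCount, Nat.card_eq_fintype_card]
  omega

theorem exists_adjacent {τ : Perm (Fin l)} (hAl : Aligned τ) (hNC : ¬ Cross τ)
    (hfp : ∀ x, τ x ≠ x) : ∃ y, τ y = y + 1 := by
  classical
  set F : Fin l → Finset (Fin l) := fun x => Finset.univ.filter (fun w => τ.SameCycle x w)
    with hF
  have hmemF : ∀ x w, w ∈ F x ↔ τ.SameCycle x w := by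
    intro x w; rw [hF]; simp
  have hFne : ∀ x, (F x).Nonempty := fun x => ⟨x, (hmemF x x).mpr (Equiv.Perm.SameCycle.refl _ _)⟩
  set span : Fin l → ℕ := fun x => ((F x).max' (hFne x)).val - ((F x).min' (hFne x)).val
    with hspan
  obtain ⟨x₀, _, hmin⟩ := Finset.exists_min_image Finset.univ span
    ⟨⟨0, Nat.pos_of_ne_zero (NeZero.ne l)⟩, Finset.mem_univ _⟩
  set m1 := (F x₀).min' (hFne x₀) with hm1
  have hm1F : m1 ∈ F x₀ := Finset.min'_mem _ _
  have hcard2 : 1 < (F x₀).card := by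
    apply Finset.one_lt_card.mpr
    exact ⟨x₀, (hmemF _ _).mpr (Equiv.Perm.SameCycle.refl _ _),
      τ x₀, (hmemF _ _).mpr ⟨1, rfl⟩, fun h => hfp x₀ h.symm⟩
  have herase : ((F x₀).erase m1).Nonempty := by
    rw [← Finset.card_pos, Finset.card_erase_of_mem hm1F]
    omega
  set m2 := ((F x₀).erase m1).min' herase with hm2
  have hm2e : m2 ∈ (F x₀).erase m1 := Finset.min'_mem _ _
  have hm2F : m2 ∈ F x₀ := Finset.mem_of_mem_erase hm2e
  have hm2ne : m2 ≠ m1 := Finset.ne_of_mem_erase hm2e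
  have hm2le : ∀ w ∈ F x₀, w ≠ m1 → m2 ≤ w := fun w hw hwne =>
    Finset.min'_le _ _ (Finset.mem_erase.mpr ⟨hwne, hw⟩)
  have hm12 : m1.val < m2.val := by
    rcases lt_or_eq_of_le (Finset.min'_le _ _ hm2F : m1 ≤ m2) with h | h
    · exact h
    · exact absurd h.symm hm2ne
  have hscm12 : τ.SameCycle m1 m2 :=
    ((hmemF x₀ m1).mp hm1F).symm.trans ((hmemF x₀ m2).mp hm2F)
  rcases eq_or_lt_of_le (Nat.succ_le_of_lt hm12) with hadj | hgap
  · -- m2 = m1 + 1 : adjacent pair in a block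
    refine ⟨m1, ?_⟩
    have hd12 : dd m1 m2 = 1 := by
      rw [dd_val]
      have := m2.isLt
      split <;> omega
    have hda := hAl m1 m2 hscm12 hm2ne
    rw [hd12] at hda
    have hdn0 : dd m1 (τ m1) ≠ 0 := by
      intro h
      rw [dd_val] at h
      have h2 : τ m1 = m1 := by
        have := (τ m1).isLt; have := m1.isLt
        apply Fin.ext
        split at h <;> omega
      exact hfp m1 h2
    have : dd m1 (τ m1) = 1 := by omega
    rw [dd_one this]
  · -- there is a gap: m1.val + 1 < m2.val
    exfalso
    have hx : m1.val + 1 < l := lt_trans hgap m2.isLt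
    set x : Fin l := ⟨m1.val + 1, hx⟩ with hxdef
    have hxne1 : x ≠ m1 := by
      intro h; have := congrArg Fin.val h; simp [hxdef] at this
    have hxnotF : x ∉ F x₀ := by
      intro hmem
      have h := hm2le x hmem hxne1
      have : m2.val ≤ m1.val + 1 := h
      omega
    have hbet : ∀ w ∈ F x, m1.val < w.val ∧ w.val < m2.val := by
      intro w hw
      have hscxw : τ.SameCycle x w := (hmemF x w).mp hw
      have hwnot : ¬ τ.SameCycle x₀ w := by
        intro h
        exact hxnotF ((hmemF x₀ x).mpr (h.trans hscxw.symm))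
      have hwm1 : w ≠ m1 := by
        rintro rfl
        exact hwnot ((hmemF x₀ m1).mp hm1F)
      have hwm2 : w ≠ m2 := by
        rintro rfl
        exact hwnot ((hmemF x₀ m2).mp hm2F)
      have hnwm1 : ¬ τ.SameCycle w m1 := by
        intro h
        exact hwnot (((hmemF x₀ m1).mp hm1F).trans h.symm)
      have hnm1x : ¬ τ.SameCycle m1 x := by
        intro h
        exact hxnotF ((hmemF x₀ x).mpr (((hmemF x₀ m1).mp hm1F).trans h))
      rcases Nat.lt_trichotomy w.val m1.val with hlt | heq | hgt1
      · -- crossing (w, m1, x, m2)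
        exfalso
        apply hNC
        refine ⟨w, m1, x, m2, ?_, ?_, ?_, hscxw.symm, hscm12, hnwm1⟩
        · rw [dd_val]; split <;> omega
        · rw [dd_val, dd_val]; simp only [hxdef]; split <;> split <;> omega
        · rw [dd_val, dd_val]; simp only [hxdef]; split <;> split <;> omega
      · exact absurd (Fin.ext heq) hwm1
      rcases Nat.lt_trichotomy w.val m2.val with hlt2 | heq2 | hgt2
      · exact ⟨hgt1, hlt2⟩
      · exact absurd (Fin.ext heq2) hwm2
      · -- crossing (m1, x, m2, w)
        exfalso
        apply hNC
        refine ⟨m1, x, m2, w, ?_, ?_, ?_, hscm12, hscxw, hnm1x⟩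
        · rw [dd_val]; simp only [hxdef]; split <;> omega
        · rw [dd_val, dd_val]; simp only [hxdef]; split <;> split <;> omega
        · rw [dd_val, dd_val]; split <;> split <;> omega
    -- now the block of x has strictly smaller span
    have hxx : x ∈ F x := (hmemF x x).mpr (Equiv.Perm.SameCycle.refl _ _)
    have hmnx := hbet _ (Finset.min'_mem (F x) (hFne x))
    have hmxx := hbet _ (Finset.max'_mem (F x) (hFne x))
    have hsx0 : m2.val ≤ ((F x₀).max' (hFne x₀)).val :=
      Finset.le_max' _ _ hm2F
    have hs := hmin x (Finset.mem_univ x)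
    rw [hspan] at hs
    simp only at hs
    rw [← hm1] at hs
    omega
end pigeon

section main
variable {l : ℕ}

theorem finRotate_apply [NeZero l] (x : Fin l) : finRotate l x = x + 1 := by
  obtain ⟨m, rfl⟩ : ∃ m, l = m + 1 :=
    ⟨l - 1, (Nat.succ_pred_eq_of_pos (Nat.pos_of_ne_zero (NeZero.ne l))).symm⟩
  exact finRotate_succ_apply x

theorem main_iff : ∀ (N l : ℕ) [NeZero l] (τ : Perm (Fin l)), l + (l - cycleCount τ) ≤ N →
    (cycleCount τ + cycleCount (τ⁻¹ * finRotate l) = l + 1 ↔ (Aligned τ ∧ ¬ Cross τ)) := by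
  intro N
  induction N with
  | zero =>
    intro l hNZ τ hm
    exfalso
    have := Nat.pos_of_ne_zero (NeZero.ne l)
    omega
  | succ N ih =>
    intro l hNZ τ hm
    by_cases h1 : τ = 1
    · -- base : identity
      subst h1
      have e1 : cycleCount (1 : Perm (Fin l)) = l := cc_one
      have e2 : cycleCount ((1 : Perm (Fin l))⁻¹ * finRotate l) = 1 := by
        rw [inv_one, one_mul, cc_finRotate]
      rw [e1, e2]
      constructor
      · intro _
        constructor
        · intro i j hsc hne
          exact absurd (Equiv.Perm.sameCycle_one.mp hsc).symm hne
        · rintro ⟨a, b, c, d, hc1, hc2, hc3, hac, _, _⟩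
          have : a = c := Equiv.Perm.sameCycle_one.mp hac
          subst this
          rw [dd_self] at hc2
          omega
      · intro _; omega
    -- any cyclic successor pair forces l = 1, τ = 1
    have hl2 : ∀ x : Fin l, x + 1 ≠ x := by
      intro x hx
      apply h1
      have h0 : (1 : Fin l) = 0 := by
        have h := congrArg (fun t => t - x) hx
        simpa using h
      have hl1 : l = 1 := by
        have hv := congrArg Fin.val h0
        rw [Fin.val_one', Fin.val_zero] at hv
        have := Nat.pos_of_ne_zero (NeZero.ne l)
        rcases Nat.lt_or_ge 1 l with h | h
        · rw [Nat.mod_eq_of_lt h] at hv; omega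
        · omega
      subst hl1
      exact Equiv.ext fun a => Subsingleton.elim _ _
    by_cases h2 : ∃ y, τ y = y + 1
    · -- move2 case
      obtain ⟨y, hy2⟩ := h2
      have hyz : y + 1 ≠ y := hl2 y
      have hy : τ y ≠ y := by rw [hy2]; exact hyz
      have e_cc2 : cycleCount (τ * swap y (τ y)) = cycleCount τ + 1 := cc_mu hy
      have hbary : (τ⁻¹ * finRotate l) y = y := by
        rw [Equiv.Perm.mul_apply, finRotate_apply, ← hy2, Equiv.Perm.coe_inv, Equiv.symm_apply_apply]
      have hbareq : (τ * swap y (τ y))⁻¹ * finRotate l =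
          swap y (τ y) * (τ⁻¹ * finRotate l) := by
        rw [mul_inv_rev, swap_inv, mul_assoc]
      have e_ccbar : cycleCount (τ⁻¹ * finRotate l) =
          cycleCount (swap y (τ y) * (τ⁻¹ * finRotate l)) + 1 :=
        cc_swap_mul _ hbary hy
      have hle2 := cc_le (τ * swap y (τ y))
      have hm2 : l + (l - cycleCount (τ * swap y (τ y))) ≤ N := by
        rw [e_cc2] at hle2 ⊢
        omega
      have ihτ2 := ih l (τ * swap y (τ y)) hm2
      have hmin_iff : (cycleCount τ + cycleCount (τ⁻¹ * finRotate l) = l + 1) ↔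
          (cycleCount (τ * swap y (τ y)) +
            cycleCount ((τ * swap y (τ y))⁻¹ * finRotate l) = l + 1) := by
        rw [hbareq, e_cc2]
        omega
      rw [hmin_iff, ihτ2]
      exact ⟨fun ⟨a, c⟩ => ⟨aligned_move2_bwd hy2 hyz a,
          fun hc => c (cross_move2_fwd hy2 hyz hc)⟩,
        fun ⟨a, c⟩ => ⟨aligned_move2_fwd hy2 hyz a,
          fun hc => c (cross_move2_bwd hy2 hyz hc)⟩⟩
    by_cases h3 : ∃ y, τ y = y
    · -- deletion case
      obtain ⟨y, hy3⟩ := h3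
      have hl1 : l ≠ 1 := by
        intro h
        apply h1
        subst h
        exact Equiv.ext fun a => Subsingleton.elim _ _
      obtain ⟨m, rfl⟩ : ∃ m, l = m + 2 := by
        refine ⟨l - 2, ?_⟩
        have := Nat.pos_of_ne_zero (NeZero.ne l)
        omega
      set k : Fin (m + 2) := y - Fin.last (m + 1) with hk
      have hfix : rotc k τ (Fin.last (m + 1)) = Fin.last (m + 1) := by
        rw [rotc_apply]
        have h4 : Fin.last (m + 1) + k = y := by
          rw [hk, add_sub_cancel]
        rw [h4, hy3, hk, sub_sub_cancel]
      -- cc relations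
      have ecc1 : cycleCount (rotc k τ) = cycleCount τ := cc_rotc k τ
      have eccbar1 : cycleCount ((rotc k τ)⁻¹ * finRotate (m+2)) =
          cycleCount (τ⁻¹ * finRotate (m+2)) := by
        rw [rotc_bar, cc_rotc]
      have ecc2 : cycleCount (rotc k τ) = cycleCount (down (rotc k τ) hfix) + 1 :=
        cc_down hfix
      have eccK : cycleCount (((rotc k τ)⁻¹ * finRotate (m+2)) *
            swap (wpt (m+1)) (((rotc k τ)⁻¹ * finRotate (m+2)) (wpt (m+1)))) =
          cycleCount ((rotc k τ)⁻¹ * finRotate (m+2)) + 1 :=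
        cc_mu (taubar_w_ne (rotc k τ) hfix)
      have eccKdown := cc_down (Kfix (rotc k τ) hfix)
      have eccbar2 : cycleCount ((down (rotc k τ) hfix)⁻¹ * finRotate (m+1)) + 1 =
          cycleCount ((rotc k τ)⁻¹ * finRotate (m+2)) + 1 := by
        rw [down_rotate (rotc k τ) hfix, ← eccK, eccKdown]
      have hccpos := cc_pos τ
      have hccle := cc_le τ
      have hmd : (m+1) + ((m+1) - cycleCount (down (rotc k τ) hfix)) ≤ N := by
        have : cycleCount (down (rotc k τ) hfix) + 1 = cycleCount τ := by
          rw [← ecc2, ecc1]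
        omega
      have ihd := ih (m+1) (down (rotc k τ) hfix) hmd
      have hmin_iff : (cycleCount τ + cycleCount (τ⁻¹ * finRotate (m+2)) = (m+2) + 1) ↔
          (cycleCount (down (rotc k τ) hfix) +
            cycleCount ((down (rotc k τ) hfix)⁻¹ * finRotate (m+1)) = (m+1) + 1) := by
        omega
      rw [hmin_iff, ihd]
      have hA1 := aligned_rotc k τ
      have hC1 := cross_rotc k τ
      have hA2 := aligned_down_iff hfix
      have hC2 := cross_down_iff hfix
      constructor
      · rintro ⟨a, c⟩
        exact ⟨hA1.mp (hA2.mpr a), fun hc => c (hC2.mp (hC1.mpr hc))⟩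
      · rintro ⟨a, c⟩
        exact ⟨hA2.mp (hA1.mpr a), fun hc => c (hC1.mp (hC2.mpr hc))⟩
    · -- final case : no fixed point, no successor pair
      push_neg at h2 h3
      apply iff_of_false
      · intro hmin
        have hbfp : ∀ x, (τ⁻¹ * finRotate l) x ≠ x := by
          intro x hx
          rw [Equiv.Perm.mul_apply, finRotate_apply] at hx
          apply h2 x
          have h5 := congrArg τ hx
          rw [Equiv.Perm.coe_inv, Equiv.apply_symm_apply] at h5
          exact h5.symm
        have p1 := two_mul_cc_le τ h3
        have p2 := two_mul_cc_le (τ⁻¹ * finRotate l) hbfp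
        omega
      · rintro ⟨hAl, hNC⟩
        obtain ⟨y, hy⟩ := exists_adjacent hAl hNC h3
        exact h2 y hy

end main

section glue
variable {l : ℕ} [NeZero l]

/-- the cyclic crossing condition for a setoid -/
def CrossS (π : Setoid (Fin l)) : Prop :=
  ∃ a b c d : Fin l, 0 < dd a b ∧ dd a b < dd a c ∧ dd a c < dd a d ∧
    π.r a c ∧ π.r b d ∧ ¬ π.r a b

theorem cross_iff_crossS (τ : Perm (Fin l)) : Cross τ ↔ CrossS (cycleSetoid τ) := Iff.rfl

theorem noncrossing_iff (π : Setoid (Fin l)) : NonCrossing π ↔ ¬ CrossS π := by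
  rw [NonCrossing]
  apply not_congr
  constructor
  · rintro ⟨a, b, c, d, hab, hbc, hcd, hac, hbd, hnab⟩
    have h1 : a.val < b.val := hab
    have h2 : b.val < c.val := hbc
    have h3 : c.val < d.val := hcd
    refine ⟨a, b, c, d, ?_, ?_, ?_, hac, hbd, hnab⟩
    · rw [dd_val]; split <;> omega
    · rw [dd_val, dd_val]; split <;> split <;> omega
    · rw [dd_val, dd_val]; split <;> split <;> omega
  · rintro ⟨a, b, c, d, h1, h2, h3, hac, hbd, hnab⟩
    rw [dd_val] at h1
    rw [dd_val, dd_val] at h2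
    rw [dd_val, dd_val] at h3
    have hva := a.isLt; have hvb := b.isLt; have hvc := c.isLt; have hvd := d.isLt
    split_ifs at h1 h2 h3 with g1 g2 g3
    · -- a ≤ b, a ≤ c, a ≤ d : linear (a,b,c,d)
      exact ⟨a, b, c, d, Fin.lt_def.mpr (by omega), Fin.lt_def.mpr (by omega),
        Fin.lt_def.mpr (by omega), hac, hbd, hnab⟩
    · -- a ≤ b, a ≤ c, d < a : linear (d,a,b,c)
      exact ⟨d, a, b, c, Fin.lt_def.mpr (by omega), Fin.lt_def.mpr (by omega),
        Fin.lt_def.mpr (by omega), π.iseqv.symm hbd, hac,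
        fun h => hnab (π.iseqv.trans (π.iseqv.symm h) (π.iseqv.symm hbd))⟩
    · omega
    · -- a ≤ b, c < a, d < a : linear (c,d,a,b)
      exact ⟨c, d, a, b, Fin.lt_def.mpr (by omega), Fin.lt_def.mpr (by omega),
        Fin.lt_def.mpr (by omega), π.iseqv.symm hac, π.iseqv.symm hbd,
        fun h => hnab (π.iseqv.trans (π.iseqv.trans hac h) (π.iseqv.symm hbd))⟩
    · omega
    · omega
    · omega
    · -- b < a, c < a, d < a : linear (b,c,d,a)
      exact ⟨b, c, d, a, Fin.lt_def.mpr (by omega), Fin.lt_def.mpr (by omega),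
        Fin.lt_def.mpr (by omega), hbd, π.iseqv.symm hac,
        fun h => hnab (π.iseqv.trans hac (π.iseqv.symm h))⟩
end glue

section glue2
variable {l : ℕ} [NeZero l]

/-- the step size of `nextElem` -/
noncomputable def Tstep (π : Setoid (Fin l)) (i : Fin l) : ℕ :=
  sInf {t : ℕ | 0 < t ∧ π.r i (i + (t : Fin l))}

theorem nextElem_eq (π : Setoid (Fin l)) (i : Fin l) :
    nextElem π i = i + ((Tstep π i : ℕ) : Fin l) := rfl

theorem Tstep_mem (π : Setoid (Fin l)) (i : Fin l) :
    0 < Tstep π i ∧ π.r i (i + ((Tstep π i : ℕ) : Fin l)) := by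
  have hl : 0 < l := Nat.pos_of_ne_zero (NeZero.ne l)
  have hmem : l ∈ {t : ℕ | 0 < t ∧ π.r i (i + (t : Fin l))} := by
    refine ⟨hl, ?_⟩
    rw [Fin.natCast_self, add_zero]
  exact Nat.sInf_mem ⟨l, hmem⟩

theorem Tstep_le (π : Setoid (Fin l)) (i : Fin l) {t : ℕ} (ht : 0 < t)
    (hr : π.r i (i + (t : Fin l))) : Tstep π i ≤ t :=
  Nat.sInf_le ⟨ht, hr⟩

theorem Tstep_le_l (π : Setoid (Fin l)) (i : Fin l) : Tstep π i ≤ l := by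
  have hl : 0 < l := Nat.pos_of_ne_zero (NeZero.ne l)
  apply Tstep_le π i hl
  rw [Fin.natCast_self, add_zero]

theorem nextElem_mem (π : Setoid (Fin l)) (i : Fin l) : π.r i (nextElem π i) := by
  rw [nextElem_eq]
  exact (Tstep_mem π i).2

theorem aligned_iff_nextElem (τ : Perm (Fin l)) :
    Aligned τ ↔ ∀ i, τ i = nextElem (cycleSetoid τ) i := by
  have hl : 0 < l := Nat.pos_of_ne_zero (NeZero.ne l)
  constructor
  · intro hAl i
    rcases eq_or_ne (τ i) i with hfix | hfix
    · -- fixed point: the block is a singleton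
      have h2 := (Tstep_mem (cycleSetoid τ) i).2
      have h3 : i + ((Tstep (cycleSetoid τ) i : ℕ) : Fin l) = i :=
        (sc_fixed hfix).mp h2
      rw [nextElem_eq, h3, hfix]
    · set t0 := dd i (τ i) with ht0
      have h0 : 0 < t0 := by
        rcases Nat.eq_zero_or_pos t0 with h | h
        · exact absurd (dd_eq_zero_iff.mp h).symm hfix
        · exact h
      have hadd : i + ((t0 : ℕ) : Fin l) = τ i := add_dd i (τ i)
      have hT_le : Tstep (cycleSetoid τ) i ≤ t0 :=
        Tstep_le _ i h0 (by rw [hadd]; exact (⟨1, rfl⟩ : τ.SameCycle i (τ i)))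
      have hT0 := (Tstep_mem (cycleSetoid τ) i).1
      have hTlt : Tstep (cycleSetoid τ) i < l := lt_of_le_of_lt hT_le (dd_lt i (τ i))
      set T := Tstep (cycleSetoid τ) i with hT
      have hji : i + ((T : ℕ) : Fin l) ≠ i := by
        intro h
        have hv := congrArg Fin.val (congrArg (fun w => w - i) h)
        simp only [add_sub_cancel_left, sub_self] at hv
        rw [Fin.val_natCast, Nat.mod_eq_of_lt hTlt] at hv
        simp at hv
        omega
      have ha := hAl i (i + ((T : ℕ) : Fin l)) ((Tstep_mem (cycleSetoid τ) i).2) hji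
      rw [dd_add_nat, Nat.mod_eq_of_lt hTlt] at ha
      have : T = t0 := le_antisymm hT_le ha
      rw [nextElem_eq, ← hT, this, hadd]
  · intro hne i j hsc hji
    rcases eq_or_ne (τ i) i with hfix | hfix
    · exact absurd ((sc_fixed hfix).mp hsc) hji
    · have hij := hne i
      have ht : 0 < dd i j := by
        rcases Nat.eq_zero_or_pos (dd i j) with h | h
        · exact absurd (dd_eq_zero_iff.mp h).symm hji
        · exact h
      have hT_le : Tstep (cycleSetoid τ) i ≤ dd i j :=
        Tstep_le _ i ht (by rw [add_dd]; exact hsc)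
      have h2 : dd i (τ i) = Tstep (cycleSetoid τ) i % l := by
        rw [hij, nextElem_eq, dd_add_nat]
      rw [h2, Nat.mod_eq_of_lt (lt_of_le_of_lt hT_le (dd_lt i j))]
      exact hT_le

/-- the orbits of a permutation realizing `nextElem π` are exactly the blocks of `π`. -/
theorem cycleSetoid_eq (π : Setoid (Fin l)) (σ : Perm (Fin l))
    (h : ∀ i, σ i = nextElem π i) : cycleSetoid σ = π := by
  have hl : 0 < l := Nat.pos_of_ne_zero (NeZero.ne l)
  have fwd : ∀ (k : ℕ) (i : Fin l), π.r i ((σ ^ k) i) := by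
    intro k i
    induction k with
    | zero => exact π.iseqv.refl i
    | succ k ih =>
      rw [pow_succ', Equiv.Perm.mul_apply]
      refine π.iseqv.trans ih ?_
      rw [h ((σ ^ k) i)]
      exact nextElem_mem π _
  have bwd : ∀ (n : ℕ) (i j : Fin l), dd i j ≤ n → π.r i j → σ.SameCycle i j := by
    intro n
    induction n with
    | zero =>
      intro i j hd hr
      have : i = j := dd_eq_zero_iff.mp (Nat.le_zero.mp hd)
      subst this
      exact Equiv.Perm.SameCycle.refl _ _
    | succ n ih =>
      intro i j hd hr
      rcases eq_or_ne j i with rfl | hji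
      · exact Equiv.Perm.SameCycle.refl _ _
      have ht : 0 < dd i j := by
        rcases Nat.eq_zero_or_pos (dd i j) with h' | h'
        · exact absurd (dd_eq_zero_iff.mp h').symm hji
        · exact h'
      have hT_le : Tstep π i ≤ dd i j := Tstep_le π i ht (by rw [add_dd]; exact hr)
      have hT0 := (Tstep_mem π i).1
      have hTlt : Tstep π i < l := lt_of_le_of_lt hT_le (dd_lt i j)
      have hσi : σ i = i + ((Tstep π i : ℕ) : Fin l) := by rw [h i, nextElem_eq]
      have hdσ : dd i (σ i) = Tstep π i := by
        rw [hσi, dd_add_nat, Nat.mod_eq_of_lt hTlt]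
      rcases eq_or_ne (σ i) j with hj | hj
      · exact ⟨1, by simpa using hj⟩
      · have hrσ : π.r (σ i) j := by
          refine π.iseqv.trans (π.iseqv.symm ?_) hr
          rw [h i]; exact nextElem_mem π i
        have hdd2 : dd (σ i) j = dd i j - Tstep π i := by
          rw [← hdσ]
          exact dd_sub (by rw [hdσ]; exact hT_le)
        have hrec := ih (σ i) j (by omega) hrσ
        exact Equiv.Perm.SameCycle.trans ⟨1, rfl⟩ hrec
  apply Setoid.ext
  intro i j
  constructor
  · intro hsc
    obtain ⟨k, rfl⟩ := (sc_pow_iff σ).mp hsc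
    exact fwd k i
  · intro hr
    exact bwd (dd i j) i j le_rfl hr
end glue2

theorem setoid_finite (n : ℕ) : Finite (Setoid (Fin n)) :=
  Finite.of_injective (fun s : Setoid (Fin n) => s.r)
    (fun a b h => Setoid.ext fun x y => iff_of_eq (congrFun (congrFun h x) y))

end P18

open scoped Classical in
/-- the free cumulant `R_{l+1}` of the multirectangular diagram
is the sum, over non-crossing partitions `π` of `{1,…,l}`, of
`(-1)^{|π|+1} N^π`, where `N^π` is the power series of the bicolored map of the
minimal factorization `(σ_π, σ_π⁻¹ (1 … l))` determined by `π`, `σ_π` being the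
permutation sending each `i` to the next element of its block in the cyclic
order `(1,…,l)`. -/
theorem freeCumulant_eq_sum_noncrossing (l : ℕ) [NeZero l]
    (s : Setoid (Fin l) → Equiv.Perm (Fin l))
    (hs : ∀ π : Setoid (Fin l), NonCrossing π → ∀ i, s π i = nextElem π i)
    (m : ℕ) (p q : Fin m → ℝ) :
    Rcum (l + 1) p q =
      ∑ᶠ π : Setoid (Fin l),
        if NonCrossing π then
          (-1 : ℝ) ^ (Nat.card (Quotient π) + 1) *
            Nperm (s π) ((s π)⁻¹ * finRotate l) p q
        else 0 := by
  classical
  haveI : Finite (Setoid (Fin l)) := P18.setoid_finite l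
  haveI : Fintype (Setoid (Fin l)) := Fintype.ofFinite _
  have hMAIN : ∀ τ : Equiv.Perm (Fin l),
      (cycleCount τ + cycleCount (τ⁻¹ * finRotate l) = l + 1 ↔
        (P18.Aligned τ ∧ ¬ P18.Cross τ)) := by
    intro τ
    exact P18.main_iff (l + l) l τ (by omega)
  have hRcum : Rcum (l + 1) p q = ∑ τ : Equiv.Perm (Fin l),
      (if cycleCount τ + cycleCount (τ⁻¹ * finRotate l) = l + 1 then
        (-1 : ℝ) ^ (cycleCount τ + 1) * Nperm τ (τ⁻¹ * finRotate l) p q else 0) := rfl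
  rw [hRcum, finsum_eq_sum_of_fintype]
  rw [← Finset.sum_filter, ← Finset.sum_filter]
  -- bijection between minimal factorizations and non-crossing partitions
  apply Finset.sum_nbij' (i := fun τ => cycleSetoid τ) (j := fun π => s π)
  · -- hi : membership
    intro τ hτ
    rw [Finset.mem_filter] at hτ ⊢
    refine ⟨Finset.mem_univ _, ?_⟩
    obtain ⟨hAl, hNC⟩ := (hMAIN τ).mp hτ.2
    exact (P18.noncrossing_iff (cycleSetoid τ)).mpr hNC
  · -- hj : membership
    intro π hπ
    rw [Finset.mem_filter] at hπ ⊢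
    refine ⟨Finset.mem_univ _, ?_⟩
    have hNCπ := hπ.2
    have hsπ := hs π hNCπ
    have hcs : cycleSetoid (s π) = π := P18.cycleSetoid_eq π (s π) hsπ
    apply (hMAIN (s π)).mpr
    constructor
    · apply (P18.aligned_iff_nextElem (s π)).mpr
      intro i
      rw [hcs]
      exact hsπ i
    · show ¬ P18.CrossS (cycleSetoid (s π))
      rw [hcs]
      exact (P18.noncrossing_iff π).mp hNCπ
  · -- left inverse
    intro τ hτ
    rw [Finset.mem_filter] at hτ
    obtain ⟨hAl, hNC⟩ := (hMAIN τ).mp hτ.2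
    have hNCτ : NonCrossing (cycleSetoid τ) := (P18.noncrossing_iff (cycleSetoid τ)).mpr hNC
    exact Equiv.ext fun i =>
      (hs (cycleSetoid τ) hNCτ i).trans ((P18.aligned_iff_nextElem τ).mp hAl i).symm
  · -- right inverse
    intro π hπ
    rw [Finset.mem_filter] at hπ
    exact P18.cycleSetoid_eq π (s π) (hs π hπ.2)
  · -- values agree
    intro τ hτ
    rw [Finset.mem_filter] at hτ
    obtain ⟨hAl, hNC⟩ := (hMAIN τ).mp hτ.2
    have hNCτ : NonCrossing (cycleSetoid τ) := (P18.noncrossing_iff (cycleSetoid τ)).mpr hNC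
    have hst : s (cycleSetoid τ) = τ := Equiv.ext fun i =>
      (hs (cycleSetoid τ) hNCτ i).trans ((P18.aligned_iff_nextElem τ).mp hAl i).symm
    rw [hst]
    rfl
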